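/- Let G be a Garside group of finite type, let x ∈ G be rigid, and let s ∈ G with inf(x^s) = inf(x) and sup(x^s) = sup(x). Then for all integers i ≥ 0: (1) 1 = 𝔓₀(x^s) ≼ 𝔓₁(x^s) ≼ ⋯ ≼ 𝔓_i(x^s) ≼ 𝔓_{i+1}(x^s) ≼ Δ^{ℓ(s)}; and (2) s = s^{(0)} ≼ s^{(1)} ≼ ⋯ ≼ s^{(i)} ≼ s^{(i+1)} ≼ Δ^{sup(s)}, where s^{(i)} denotes the i-fold iterated transport of s at x. -/

import Mathlib

namespace GarsidePaper

/-- A Garside structure of finite type on a group `G`: a positive submonoid `P` with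
`P ∩ P⁻¹ = {1}`, a Garside element `Δ ∈ P`, the prefix order `a ≼ b ↔ a⁻¹b ∈ P`
a lattice order (with meet `wedge` and join `vee`), the simple elements `[1,Δ]`
generating `G` and being finite, `Δ⁻¹PΔ = P`, a finite norm on positive elements,
and the infimum and supremum functions `inf`, `sup` characterised by
`Δ^(inf x) ≼ x ≼ Δ^(sup x)` with `inf x` maximal and `sup x` minimal. -/
structure Garside (G : Type*) [Group G] where
  P : Submonoid G
  Δ : G
  purity : ∀ a : G, a ∈ P → a⁻¹ ∈ P → a = 1
  delta_mem : Δ ∈ P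
  wedge : G → G → G
  vee : G → G → G
  wedge_le_left : ∀ a b : G, (wedge a b)⁻¹ * a ∈ P
  wedge_le_right : ∀ a b : G, (wedge a b)⁻¹ * b ∈ P
  le_wedge : ∀ a b c : G, c⁻¹ * a ∈ P → c⁻¹ * b ∈ P → c⁻¹ * wedge a b ∈ P
  le_vee_left : ∀ a b : G, a⁻¹ * vee a b ∈ P
  le_vee_right : ∀ a b : G, b⁻¹ * vee a b ∈ P
  vee_le : ∀ a b c : G, a⁻¹ * c ∈ P → b⁻¹ * c ∈ P → (vee a b)⁻¹ * c ∈ P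
  simples_generate : Subgroup.closure {a : G | a ∈ P ∧ a⁻¹ * Δ ∈ P} = (⊤ : Subgroup G)
  conj_pos : ∀ a : G, a ∈ P → Δ⁻¹ * a * Δ ∈ P
  norm : G → ℕ
  norm_exists : ∀ x : G, x ∈ P → x ≠ 1 →
    ∃ l : List G, (∀ s ∈ l, s ∈ P ∧ s ≠ 1) ∧ l.prod = x ∧ l.length = norm x
  norm_max : ∀ x : G, x ∈ P → x ≠ 1 →
    ∀ l : List G, (∀ s ∈ l, s ∈ P ∧ s ≠ 1) → l.prod = x → l.length ≤ norm x
  simples_finite : Set.Finite {a : G | a ∈ P ∧ a⁻¹ * Δ ∈ P}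
  inf : G → ℤ
  sup : G → ℤ
  inf_le : ∀ x : G, (Δ ^ inf x)⁻¹ * x ∈ P
  inf_max : ∀ (x : G) (p : ℤ), (Δ ^ p)⁻¹ * x ∈ P → p ≤ inf x
  le_sup : ∀ x : G, x⁻¹ * Δ ^ sup x ∈ P
  sup_min : ∀ (x : G) (q : ℤ), x⁻¹ * Δ ^ q ∈ P → sup x ≤ q

namespace Garside

variable {G : Type*} [Group G]

/-- The prefix order `a ≼ b`. -/
def le (S : Garside G) (a b : G) : Prop := a⁻¹ * b ∈ S.P

/-- The canonical length `ℓ(x) = sup(x) - inf(x)`. -/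
def len (S : Garside G) (x : G) : ℤ := S.sup x - S.inf x

/-- The initial factor `ι(x) = (x Δ^(-inf x)) ∧ Δ`. -/
def iota (S : Garside G) (x : G) : G := S.wedge (x * S.Δ ^ (-S.inf x)) S.Δ

/-- The preferred prefix `𝔭(x) = ι(x) ∧ ι(x⁻¹)`. -/
def pp (S : Garside G) (x : G) : G := S.wedge (S.iota x) (S.iota x⁻¹)

/-- Cyclic sliding `𝔰(x) = 𝔭(x)⁻¹ x 𝔭(x)`. -/
def sl (S : Garside G) (x : G) : G := (S.pp x)⁻¹ * x * S.pp x

/-- The final factor `φ(x) = (Δ^(sup x - 1) ∧ x)⁻¹ x`. -/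
def phi (S : Garside G) (x : G) : G := (S.wedge (S.Δ ^ (S.sup x - 1)) x)⁻¹ * x

/-- Conjugation by `Δ`: `τ(x) = Δ⁻¹ x Δ`. -/
def tau (S : Garside G) (x : G) : G := S.Δ⁻¹ * x * S.Δ

/-- Cycling `c(x) = ι(x)⁻¹ x ι(x)`. -/
def cyc (S : Garside G) (x : G) : G := (S.iota x)⁻¹ * x * S.iota x

/-- Decycling `d(x) = φ(x) x φ(x)⁻¹`. -/
def dec (S : Garside G) (x : G) : G := S.phi x * x * (S.phi x)⁻¹

/-- The transport `α^{(1)} = 𝔭(x)⁻¹ α 𝔭(x^α)` of `α` at `x`. -/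
def transport (S : Garside G) (x α : G) : G := (S.pp x)⁻¹ * α * S.pp (α⁻¹ * x * α)

/-- The iterated transport: `itTransport x i α = α^{(i)}`, the transport of `α^{(i-1)}`
at `𝔰^{i-1}(x)`, with `α^{(0)} = α`. -/
def itTransport (S : Garside G) (x : G) : ℕ → G → G
  | 0, α => α
  | i + 1, α => S.transport ((S.sl)^[i] x) (S.itTransport x i α)

/-- `𝔓_i(x) = 𝔭(x) 𝔭(𝔰(x)) ⋯ 𝔭(𝔰^{i-1}(x))`, with `𝔓₀(x) = 1`. -/
def PP (S : Garside G) (x : G) : ℕ → G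
  | 0 => 1
  | i + 1 => S.PP x i * S.pp ((S.sl)^[i] x)

/-- The summit set `SS(x)`. -/
def SS (S : Garside G) (x : G) : Set G :=
  {y | IsConj x y ∧ ∀ z : G, IsConj x z → S.inf z ≤ S.inf y}

/-- The super summit set `SSS(x)`. -/
def SSS (S : Garside G) (x : G) : Set G :=
  {y | IsConj x y ∧ (∀ z : G, IsConj x z → S.inf z ≤ S.inf y) ∧
       (∀ z : G, IsConj x z → S.sup y ≤ S.sup z)}

/-- The ultra summit set `USS(x)`. -/
def USS (S : Garside G) (x : G) : Set G :=
  {y | y ∈ S.SSS x ∧ ∃ m : ℕ, 1 ≤ m ∧ (S.cyc)^[m] y = y}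

/-- The reduced super summit set `RSSS(x)`. -/
def RSSS (S : Garside G) (x : G) : Set G :=
  {y | IsConj x y ∧ (∃ m : ℕ, 1 ≤ m ∧ (S.cyc)^[m] y = y) ∧
       (∃ n : ℕ, 1 ≤ n ∧ (S.dec)^[n] y = y)}

/-- The set of sliding circuits `SC(x)`. -/
def SC (S : Garside G) (x : G) : Set G :=
  {y | IsConj x y ∧ ∃ m : ℕ, 1 ≤ m ∧ (S.sl)^[m] y = y}

variable (S : Garside G)

/-! ### Basic order lemmas -/

lemma le_def {a b : G} : S.le a b ↔ a⁻¹ * b ∈ S.P := Iff.rfl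

lemma le_refl (a : G) : S.le a a := by simp [le, S.P.one_mem]

lemma le_trans' {a b c : G} (h1 : S.le a b) (h2 : S.le b c) : S.le a c := by
  have := S.P.mul_mem h1 h2
  simpa [le, mul_assoc] using this

lemma le_antisymm' {a b : G} (h1 : S.le a b) (h2 : S.le b a) : a = b := by
  have := S.purity (a⁻¹ * b) h1 (by simpa [le] using h2)
  have : a * (a⁻¹ * b) = a * 1 := by rw [this]
  simpa using this.symm

lemma one_le {a : G} (h : a ∈ S.P) : S.le 1 a := by simpa [le] using h

lemma le_of_one_le {a : G} (h : S.le 1 a) : a ∈ S.P := by simpa [le] using h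

lemma mul_le_mul_left (g : G) {a b : G} (h : S.le a b) : S.le (g * a) (g * b) := by
  simpa [le, mul_assoc] using h

lemma le_mul_right {a b c : G} (h : S.le a b) (hc : c ∈ S.P) : S.le a (b * c) := by
  have : (a⁻¹ * b) * c ∈ S.P := S.P.mul_mem h hc
  simpa [le, mul_assoc] using this

/-- simples -/
def IsSimple (a : G) : Prop := a ∈ S.P ∧ a⁻¹ * S.Δ ∈ S.P

lemma delta_simple : S.IsSimple S.Δ := ⟨S.delta_mem, by simp [S.P.one_mem]⟩

lemma one_simple : S.IsSimple 1 := ⟨S.P.one_mem, by simpa using S.delta_mem⟩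

lemma tau_simple {a : G} (h : S.IsSimple a) : S.IsSimple (S.Δ⁻¹ * a * S.Δ) := by
  refine ⟨S.conj_pos a h.1, ?_⟩
  have : S.Δ⁻¹ * (a⁻¹ * S.Δ) * S.Δ ∈ S.P := S.conj_pos _ h.2
  have e : (S.Δ⁻¹ * a * S.Δ)⁻¹ * S.Δ = S.Δ⁻¹ * (a⁻¹ * S.Δ) * S.Δ := by group
  rw [e]; exact this

lemma tau_inv_simple {a : G} (h : S.IsSimple a) : S.IsSimple (S.Δ * a * S.Δ⁻¹) := by
  classical
  set s : Set G := {a : G | a ∈ S.P ∧ a⁻¹ * S.Δ ∈ S.P} with hs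
  have hfin : s.Finite := S.simples_finite
  have hmap : Set.MapsTo (fun a => S.Δ⁻¹ * a * S.Δ) s s := by
    intro a ha; exact S.tau_simple ha
  have hinj : Set.InjOn (fun a => S.Δ⁻¹ * a * S.Δ) s := by
    intro a _ b _ hab
    simpa using mul_left_cancel (mul_right_cancel hab)
  have hbij := (hfin.injOn_iff_bijOn_of_mapsTo hmap).mp hinj
  have hsurj := hbij.surjOn
  have ha : a ∈ s := h
  obtain ⟨b, hb, hba⟩ := hsurj ha
  have : S.Δ * a * S.Δ⁻¹ = b := by
    simp only at hba
    rw [← hba]; group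
  rw [this]; exact hb

variable {G : Type*} [Group G] (S : Garside G)

/-- Submonoid generated by simples -/
def Msub : Submonoid G := Submonoid.closure {a : G | S.IsSimple a}

lemma Msub_le_P : S.Msub ≤ S.P := by
  rw [Msub, Submonoid.closure_le]
  intro a ha; exact ha.1

lemma simple_mem_Msub {a : G} (h : S.IsSimple a) : a ∈ S.Msub :=
  Submonoid.subset_closure h

lemma tau_Msub {m : G} (h : m ∈ S.Msub) : S.Δ⁻¹ * m * S.Δ ∈ S.Msub := by
  induction h using Submonoid.closure_induction with
  | mem a ha => exact S.simple_mem_Msub (S.tau_simple ha)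
  | one => simpa using S.Msub.one_mem
  | mul a b _ _ iha ihb =>
      have := S.Msub.mul_mem iha ihb
      have e : S.Δ⁻¹ * a * S.Δ * (S.Δ⁻¹ * b * S.Δ) = S.Δ⁻¹ * (a * b) * S.Δ := by group
      rwa [e] at this

lemma tau_inv_Msub {m : G} (h : m ∈ S.Msub) : S.Δ * m * S.Δ⁻¹ ∈ S.Msub := by
  induction h using Submonoid.closure_induction with
  | mem a ha => exact S.simple_mem_Msub (S.tau_inv_simple ha)
  | one => simpa using S.Msub.one_mem
  | mul a b _ _ iha ihb =>
      have := S.Msub.mul_mem iha ihb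
      have e : S.Δ * a * S.Δ⁻¹ * (S.Δ * b * S.Δ⁻¹) = S.Δ * (a * b) * S.Δ⁻¹ := by group
      rwa [e] at this

lemma tau_pow_Msub (n : ℕ) {m : G} (h : m ∈ S.Msub) :
    (S.Δ ^ n)⁻¹ * m * S.Δ ^ n ∈ S.Msub := by
  induction n with
  | zero => simpa using h
  | succ k ih =>
      have := S.tau_Msub ih
      have e : S.Δ⁻¹ * ((S.Δ ^ k)⁻¹ * m * S.Δ ^ k) * S.Δ
          = (S.Δ ^ (k+1))⁻¹ * m * S.Δ ^ (k+1) := by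
        rw [pow_succ]; group
      rwa [e] at this

lemma tau_inv_pow_Msub (n : ℕ) {m : G} (h : m ∈ S.Msub) :
    S.Δ ^ n * m * (S.Δ ^ n)⁻¹ ∈ S.Msub := by
  induction n with
  | zero => simpa using h
  | succ k ih =>
      have := S.tau_inv_Msub ih
      have e : S.Δ * (S.Δ ^ k * m * (S.Δ ^ k)⁻¹) * S.Δ⁻¹
          = S.Δ ^ (k+1) * m * (S.Δ ^ (k+1))⁻¹ := by
        rw [pow_succ']; group
      rwa [e] at this

/-- Every element of `G` is `p·Δ^{-n}` with `p` a product of simples. -/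
lemma exists_rep (g : G) : ∃ p ∈ S.Msub, ∃ n : ℕ, g = p * (S.Δ ^ n)⁻¹ := by
  have hg : g ∈ Subgroup.closure {a : G | a ∈ S.P ∧ a⁻¹ * S.Δ ∈ S.P} := by
    rw [S.simples_generate]; trivial
  induction hg using Subgroup.closure_induction with
  | mem a ha => exact ⟨a, S.simple_mem_Msub ha, 0, by simp⟩
  | one => exact ⟨1, S.Msub.one_mem, 0, by simp⟩
  | mul a b _ _ iha ihb =>
      obtain ⟨p, hp, n, rfl⟩ := iha
      obtain ⟨q, hq, m, rfl⟩ := ihb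
      refine ⟨p * ((S.Δ ^ n)⁻¹ * q * S.Δ ^ n), S.Msub.mul_mem hp (S.tau_pow_Msub n hq),
        n + m, ?_⟩
      rw [pow_add]; group
  | inv a _ ih =>
      obtain ⟨p, hp, n, rfl⟩ := ih
      -- (p Δ^{-n})⁻¹ = Δ^n p⁻¹ ; write p⁻¹ = q Δ^{-m}
      have hinv : ∀ p ∈ S.Msub, ∃ q ∈ S.Msub, ∃ m : ℕ, p⁻¹ = q * (S.Δ ^ m)⁻¹ := by
        intro p hp
        induction hp using Submonoid.closure_induction with
        | mem a ha =>
            exact ⟨a⁻¹ * S.Δ, S.simple_mem_Msub ⟨ha.2, by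
              have e : (a⁻¹ * S.Δ)⁻¹ * S.Δ = S.Δ⁻¹ * a * S.Δ := by group
              rw [e]; exact S.conj_pos a ha.1⟩, 1, by group⟩
        | one => exact ⟨1, S.Msub.one_mem, 0, by simp⟩
        | mul a b _ _ iha ihb =>
            obtain ⟨q, hq, m, hq'⟩ := iha
            obtain ⟨r, hr, k, hr'⟩ := ihb
            refine ⟨r * ((S.Δ ^ k)⁻¹ * q * S.Δ ^ k), S.Msub.mul_mem hr (S.tau_pow_Msub k hq),
              k + m, ?_⟩
            rw [mul_inv_rev, hq', hr', pow_add]; group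
      obtain ⟨q, hq, m, hq'⟩ := hinv p hp
      refine ⟨S.Δ ^ n * q, S.Msub.mul_mem (S.Msub.pow_mem (S.simple_mem_Msub S.delta_simple) n) hq,
        m, ?_⟩
      rw [mul_inv_rev, hq']; group

lemma tau_pow_P (n : ℕ) {a : G} (h : a ∈ S.P) : (S.Δ ^ n)⁻¹ * a * S.Δ ^ n ∈ S.P := by
  induction n with
  | zero => simpa using h
  | succ k ih =>
      have := S.conj_pos _ ih
      have e : S.Δ⁻¹ * ((S.Δ ^ k)⁻¹ * a * S.Δ ^ k) * S.Δ
          = (S.Δ ^ (k+1))⁻¹ * a * S.Δ ^ (k+1) := by rw [pow_succ]; group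
      rwa [e] at this

/-- Key cancellation: a simple left-divisor of a product of simples has complement
a product of simples. -/
lemma simple_div_Msub : ∀ (l : List G), (∀ t ∈ l, S.IsSimple t) →
    ∀ u : G, S.IsSimple u → u⁻¹ * l.prod ∈ S.P → u⁻¹ * l.prod ∈ S.Msub := by
  intro l
  induction l with
  | nil =>
      intro _ u hu h
      simp only [List.prod_nil] at h ⊢
      have : u = 1 := S.purity u hu.1 (by simpa using h)
      simp [this, S.Msub.one_mem]
  | cons t l ih =>
      intro hl u hu h
      have ht : S.IsSimple t := hl t (by simp)
      have hl' : ∀ t ∈ l, S.IsSimple t := fun a ha => hl a (by simp [ha])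
      have hlP : l.prod ∈ S.P := by
        refine S.Msub_le_P (list_prod_mem fun a ha => S.simple_mem_Msub (hl' a ha))
      simp only [List.prod_cons] at h ⊢
      set j := S.vee u t with hj
      have hj1 : u⁻¹ * j ∈ S.P := S.le_vee_left u t
      have hj2 : t⁻¹ * j ∈ S.P := S.le_vee_right u t
      have hjle : j⁻¹ * (t * l.prod) ∈ S.P := by
        refine S.vee_le u t (t * l.prod) h ?_
        simpa [mul_assoc] using hlP
      have hjΔ : j⁻¹ * S.Δ ∈ S.P := S.vee_le u t S.Δ hu.2 ht.2
      have hb : S.IsSimple (t⁻¹ * j) := by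
        refine ⟨hj2, ?_⟩
        have : (j⁻¹ * S.Δ) * (S.Δ⁻¹ * t * S.Δ) ∈ S.P := S.P.mul_mem hjΔ (S.conj_pos t ht.1)
        have e : (j⁻¹ * S.Δ) * (S.Δ⁻¹ * t * S.Δ) = (t⁻¹ * j)⁻¹ * S.Δ := by group
        rwa [e] at this
      have hbl : (t⁻¹ * j)⁻¹ * l.prod ∈ S.P := by
        have e : (t⁻¹ * j)⁻¹ * l.prod = j⁻¹ * (t * l.prod) := by group
        rw [e]; exact hjle
      have hbM : (t⁻¹ * j)⁻¹ * l.prod ∈ S.Msub := ih hl' _ hb hbl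
      have hc : S.IsSimple (u⁻¹ * j) := by
        refine ⟨hj1, ?_⟩
        have : (j⁻¹ * S.Δ) * (S.Δ⁻¹ * u * S.Δ) ∈ S.P := S.P.mul_mem hjΔ (S.conj_pos u hu.1)
        have e : (j⁻¹ * S.Δ) * (S.Δ⁻¹ * u * S.Δ) = (u⁻¹ * j)⁻¹ * S.Δ := by group
        rwa [e] at this
      have : (u⁻¹ * j) * ((t⁻¹ * j)⁻¹ * l.prod) ∈ S.Msub :=
        S.Msub.mul_mem (S.simple_mem_Msub hc) hbM
      have e : (u⁻¹ * j) * ((t⁻¹ * j)⁻¹ * l.prod) = u⁻¹ * (t * l.prod) := by group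
      rwa [e] at this

lemma delta_div_Msub {p : G} (hp : p ∈ S.Msub) (h : S.Δ⁻¹ * p ∈ S.P) :
    S.Δ⁻¹ * p ∈ S.Msub := by
  obtain ⟨l, hl, hprod⟩ := Submonoid.exists_list_of_mem_closure hp
  subst hprod
  exact S.simple_div_Msub l hl S.Δ S.delta_simple h

/-- The crux: conjugation by `Δ` in the other direction preserves positivity. -/
lemma conj_pos_inv {a : G} (h : a ∈ S.P) : S.Δ * a * S.Δ⁻¹ ∈ S.P := by
  obtain ⟨p, hp, n, rfl⟩ := S.exists_rep a
  have hv : (S.Δ ^ n)⁻¹ * p ∈ S.P := by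
    have := S.tau_pow_P n h
    have e : (S.Δ ^ n)⁻¹ * (p * (S.Δ ^ n)⁻¹) * S.Δ ^ n = (S.Δ ^ n)⁻¹ * p := by group
    rwa [e] at this
  have key : ∀ j : ℕ, j ≤ n → (S.Δ ^ j)⁻¹ * p ∈ S.Msub := by
    intro j
    induction j with
    | zero => intro _; simpa using hp
    | succ k ihk =>
        intro hkn
        have hM : (S.Δ ^ k)⁻¹ * p ∈ S.Msub := ihk (Nat.le_of_succ_le hkn)
        have hPos : S.Δ⁻¹ * ((S.Δ ^ k)⁻¹ * p) ∈ S.P := by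
          obtain ⟨d, hd⟩ : ∃ d, n = d + (k+1) := ⟨n - (k+1), by omega⟩
          have : S.Δ ^ d * ((S.Δ ^ n)⁻¹ * p) ∈ S.P :=
            S.P.mul_mem (S.P.pow_mem S.delta_mem _) hv
          have e : S.Δ ^ d * ((S.Δ ^ n)⁻¹ * p)
              = S.Δ⁻¹ * ((S.Δ ^ k)⁻¹ * p) := by
            rw [hd, pow_add, pow_succ]; group
          rwa [e] at this
        have := S.delta_div_Msub hM hPos
        have e : S.Δ⁻¹ * ((S.Δ ^ k)⁻¹ * p) = (S.Δ ^ (k+1))⁻¹ * p := by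
          rw [pow_succ]; group
        rwa [e] at this
  have hvM : (S.Δ ^ n)⁻¹ * p ∈ S.Msub := key n le_rfl
  have := S.tau_inv_pow_Msub (n + 1) hvM
  have e : S.Δ ^ (n+1) * ((S.Δ ^ n)⁻¹ * p) * (S.Δ ^ (n+1))⁻¹
      = S.Δ * (p * (S.Δ ^ n)⁻¹) * S.Δ⁻¹ := by
    rw [pow_succ']; rw [mul_inv_rev]; group
  rw [e] at this
  exact S.Msub_le_P this
/-! ### Conjugation by powers of Δ -/

lemma conj_zpow_mem (k : ℤ) {a : G} (h : a ∈ S.P) : (S.Δ ^ k)⁻¹ * a * S.Δ ^ k ∈ S.P := by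
  induction k using Int.induction_on with
  | zero => simpa using h
  | succ n ih =>
      have := S.conj_pos _ ih
      have e : S.Δ⁻¹ * ((S.Δ ^ (n:ℤ))⁻¹ * a * S.Δ ^ (n:ℤ)) * S.Δ
          = (S.Δ ^ ((n:ℤ)+1))⁻¹ * a * S.Δ ^ ((n:ℤ)+1) := by group
      rwa [e] at this
  | pred n ih =>
      have := S.conj_pos_inv ih
      have e : S.Δ * ((S.Δ ^ (-n:ℤ))⁻¹ * a * S.Δ ^ (-n:ℤ)) * S.Δ⁻¹
          = (S.Δ ^ (-n-1:ℤ))⁻¹ * a * S.Δ ^ (-n-1:ℤ) := by group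
      rwa [e] at this

lemma conj_zpow_mem' (k : ℤ) {a : G} (h : a ∈ S.P) : S.Δ ^ k * a * (S.Δ ^ k)⁻¹ ∈ S.P := by
  have := S.conj_zpow_mem (-k) h
  have e : (S.Δ ^ (-k:ℤ))⁻¹ * a * S.Δ ^ (-k:ℤ) = S.Δ ^ k * a * (S.Δ ^ k)⁻¹ := by group
  rwa [e] at this

lemma delta_zpow_mem {k : ℤ} (h : 0 ≤ k) : S.Δ ^ k ∈ S.P := by
  obtain ⟨n, rfl⟩ := Int.eq_ofNat_of_zero_le h
  rw [zpow_natCast]; exact S.P.pow_mem S.delta_mem n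

lemma delta_zpow_le {p q : ℤ} (h : p ≤ q) : S.le (S.Δ ^ p) (S.Δ ^ q) := by
  have e : (S.Δ ^ p)⁻¹ * S.Δ ^ q = S.Δ ^ (q - p) := by group
  rw [le_def, e]
  exact S.delta_zpow_mem (by omega)

lemma mul_delta_inf_mem (x : G) : x * (S.Δ ^ S.inf x)⁻¹ ∈ S.P := by
  have := S.conj_zpow_mem' (S.inf x) (S.inf_le x)
  have e : S.Δ ^ S.inf x * ((S.Δ ^ S.inf x)⁻¹ * x) * (S.Δ ^ S.inf x)⁻¹
      = x * (S.Δ ^ S.inf x)⁻¹ := by group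
  rwa [e] at this

/-! ### inf and sup lemmas -/

lemma sup_inv (x : G) : S.sup x⁻¹ = -S.inf x := by
  refine _root_.le_antisymm ?_ ?_
  · refine S.sup_min _ _ ?_
    have := S.mul_delta_inf_mem x
    have e : x * (S.Δ ^ S.inf x)⁻¹ = (x⁻¹)⁻¹ * S.Δ ^ (-S.inf x) := by group
    rwa [e] at this
  · have h1 : x * S.Δ ^ S.sup x⁻¹ ∈ S.P := by
      have := S.le_sup x⁻¹
      have e : (x⁻¹)⁻¹ * S.Δ ^ S.sup x⁻¹ = x * S.Δ ^ S.sup x⁻¹ := by group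
      rwa [e] at this
    have h2 : (S.Δ ^ (-S.sup x⁻¹))⁻¹ * x ∈ S.P := by
      have := S.conj_zpow_mem' (S.sup x⁻¹) h1
      have e : S.Δ ^ S.sup x⁻¹ * (x * S.Δ ^ S.sup x⁻¹) * (S.Δ ^ S.sup x⁻¹)⁻¹
          = (S.Δ ^ (-S.sup x⁻¹))⁻¹ * x := by group
      rwa [e] at this
    have := S.inf_max x _ h2
    omega

lemma inf_inv (x : G) : S.inf x⁻¹ = -S.sup x := by
  have := S.sup_inv x⁻¹
  rw [inv_inv] at this
  omega

lemma sup_conj_zpow (k : ℤ) (x : G) : S.sup ((S.Δ ^ k)⁻¹ * x * S.Δ ^ k) = S.sup x := by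
  have key : ∀ (k : ℤ) (x : G), S.sup ((S.Δ ^ k)⁻¹ * x * S.Δ ^ k) ≤ S.sup x := by
    intro k x
    refine S.sup_min _ _ ?_
    have := S.conj_zpow_mem k (S.le_sup x)
    have e : (S.Δ ^ k)⁻¹ * (x⁻¹ * S.Δ ^ S.sup x) * S.Δ ^ k
        = ((S.Δ ^ k)⁻¹ * x * S.Δ ^ k)⁻¹ * S.Δ ^ S.sup x := by group
    rwa [e] at this
  refine _root_.le_antisymm (key k x) ?_
  have := key (-k) ((S.Δ ^ k)⁻¹ * x * S.Δ ^ k)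
  have e : (S.Δ ^ (-k:ℤ))⁻¹ * ((S.Δ ^ k)⁻¹ * x * S.Δ ^ k) * S.Δ ^ (-k:ℤ) = x := by group
  rwa [e] at this

lemma inf_conj_zpow (k : ℤ) (x : G) : S.inf ((S.Δ ^ k)⁻¹ * x * S.Δ ^ k) = S.inf x := by
  have h1 := S.sup_conj_zpow k x⁻¹
  have e : (S.Δ ^ k)⁻¹ * x⁻¹ * S.Δ ^ k = ((S.Δ ^ k)⁻¹ * x * S.Δ ^ k)⁻¹ := by group
  rw [e] at h1
  have h2 := S.sup_inv ((S.Δ ^ k)⁻¹ * x * S.Δ ^ k)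
  have h3 := S.sup_inv x
  omega

lemma sup_mul_le (a b : G) : S.sup (a * b) ≤ S.sup a + S.sup b := by
  refine S.sup_min _ _ ?_
  have h1 : b⁻¹ * S.Δ ^ S.sup b ∈ S.P := S.le_sup b
  have h2 : (S.Δ ^ S.sup b)⁻¹ * (a⁻¹ * S.Δ ^ S.sup a) * S.Δ ^ S.sup b ∈ S.P :=
    S.conj_zpow_mem _ (S.le_sup a)
  have := S.P.mul_mem h1 h2
  have e : b⁻¹ * S.Δ ^ S.sup b * ((S.Δ ^ S.sup b)⁻¹ * (a⁻¹ * S.Δ ^ S.sup a) * S.Δ ^ S.sup b)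
      = (a * b)⁻¹ * S.Δ ^ (S.sup a + S.sup b) := by group
  rwa [e] at this
/-! ### wedge lemmas -/

lemma wedge_le_l (a b : G) : S.le (S.wedge a b) a := S.wedge_le_left a b
lemma wedge_le_r (a b : G) : S.le (S.wedge a b) b := S.wedge_le_right a b
lemma le_wedge' {a b c : G} (h1 : S.le c a) (h2 : S.le c b) : S.le c (S.wedge a b) :=
  S.le_wedge a b c h1 h2

lemma wedge_comm (a b : G) : S.wedge a b = S.wedge b a :=
  S.le_antisymm' (S.le_wedge' (S.wedge_le_r a b) (S.wedge_le_l a b))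
    (S.le_wedge' (S.wedge_le_r b a) (S.wedge_le_l b a))

lemma mul_wedge (g a b : G) : g * S.wedge a b = S.wedge (g * a) (g * b) := by
  refine S.le_antisymm' ?_ ?_
  · refine S.le_wedge' ?_ ?_
    · have := S.wedge_le_l a b
      simpa [le_def, mul_assoc] using this
    · have := S.wedge_le_r a b
      simpa [le_def, mul_assoc] using this
  · have h1 : S.le (g⁻¹ * S.wedge (g * a) (g * b)) a := by
      have := S.wedge_le_l (g * a) (g * b)
      simpa [le_def, mul_assoc] using this
    have h2 : S.le (g⁻¹ * S.wedge (g * a) (g * b)) b := by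
      have := S.wedge_le_r (g * a) (g * b)
      simpa [le_def, mul_assoc] using this
    have := S.le_wedge' h1 h2
    simpa [le_def, mul_assoc] using this

lemma wedge_mem {a b : G} (ha : a ∈ S.P) (hb : b ∈ S.P) : S.wedge a b ∈ S.P := by
  have := S.le_wedge' (S.one_le ha) (S.one_le hb)
  simpa [le_def] using this

/-! ### iota and pp lemmas -/

lemma iota_le_delta (x : G) : S.le (S.iota x) S.Δ := S.wedge_le_r _ _
lemma iota_le (x : G) : S.le (S.iota x) (x * S.Δ ^ (-S.inf x)) := S.wedge_le_l _ _
lemma iota_mem (x : G) : S.iota x ∈ S.P := by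
  refine S.wedge_mem ?_ S.delta_mem
  have := S.mul_delta_inf_mem x
  rwa [← zpow_neg] at this
lemma pp_mem (x : G) : S.pp x ∈ S.P := S.wedge_mem (S.iota_mem x) (S.iota_mem x⁻¹)
lemma pp_le_iota (x : G) : S.le (S.pp x) (S.iota x) := S.wedge_le_l _ _
lemma pp_le_iota_inv (x : G) : S.le (S.pp x) (S.iota x⁻¹) := S.wedge_le_r _ _
lemma pp_inv (x : G) : S.pp x⁻¹ = S.pp x := by
  rw [pp, pp, inv_inv, S.wedge_comm]

lemma le_conj_zpow_iff (k : ℤ) {a b : G} :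
    S.le ((S.Δ ^ k)⁻¹ * a * S.Δ ^ k) ((S.Δ ^ k)⁻¹ * b * S.Δ ^ k) ↔ S.le a b := by
  constructor
  · intro h
    have := S.conj_zpow_mem' k h
    have e : S.Δ ^ k * (((S.Δ ^ k)⁻¹ * a * S.Δ ^ k)⁻¹ * ((S.Δ ^ k)⁻¹ * b * S.Δ ^ k)) * (S.Δ ^ k)⁻¹
        = a⁻¹ * b := by group
    rw [S.le_def]; rwa [e] at this
  · intro h
    have := S.conj_zpow_mem k h
    have e : (S.Δ ^ k)⁻¹ * (a⁻¹ * b) * S.Δ ^ k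
        = ((S.Δ ^ k)⁻¹ * a * S.Δ ^ k)⁻¹ * ((S.Δ ^ k)⁻¹ * b * S.Δ ^ k) := by group
    rw [S.le_def, ← e]; exact this

lemma conj_zpow_wedge (k : ℤ) (a b : G) :
    (S.Δ ^ k)⁻¹ * S.wedge a b * S.Δ ^ k
      = S.wedge ((S.Δ ^ k)⁻¹ * a * S.Δ ^ k) ((S.Δ ^ k)⁻¹ * b * S.Δ ^ k) := by
  refine S.le_antisymm' ?_ ?_
  · refine S.le_wedge' ?_ ?_
    · exact (S.le_conj_zpow_iff k).mpr (S.wedge_le_l a b)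
    · exact (S.le_conj_zpow_iff k).mpr (S.wedge_le_r a b)
  · set w := S.wedge ((S.Δ ^ k)⁻¹ * a * S.Δ ^ k) ((S.Δ ^ k)⁻¹ * b * S.Δ ^ k) with hw
    have h1 : S.le (S.Δ ^ k * w * (S.Δ ^ k)⁻¹) a := by
      have := S.wedge_le_l ((S.Δ ^ k)⁻¹ * a * S.Δ ^ k) ((S.Δ ^ k)⁻¹ * b * S.Δ ^ k)
      rw [← hw] at this
      have e : (S.Δ ^ k)⁻¹ * ((S.Δ ^ k * w * (S.Δ ^ k)⁻¹) ) * S.Δ ^ k = w := by group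
      have := (S.le_conj_zpow_iff (k := k) (a := S.Δ ^ k * w * (S.Δ ^ k)⁻¹) (b := a))
      rw [e] at this
      exact this.mp ‹S.le w ((S.Δ ^ k)⁻¹ * a * S.Δ ^ k)›
    have h2 : S.le (S.Δ ^ k * w * (S.Δ ^ k)⁻¹) b := by
      have hwb := S.wedge_le_r ((S.Δ ^ k)⁻¹ * a * S.Δ ^ k) ((S.Δ ^ k)⁻¹ * b * S.Δ ^ k)
      rw [← hw] at hwb
      have e : (S.Δ ^ k)⁻¹ * ((S.Δ ^ k * w * (S.Δ ^ k)⁻¹) ) * S.Δ ^ k = w := by group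
      have := (S.le_conj_zpow_iff (k := k) (a := S.Δ ^ k * w * (S.Δ ^ k)⁻¹) (b := b))
      rw [e] at this
      exact this.mp hwb
    have h3 := S.le_wedge' h1 h2
    have := (S.le_conj_zpow_iff (k := k)).mpr h3
    have e : (S.Δ ^ k)⁻¹ * (S.Δ ^ k * w * (S.Δ ^ k)⁻¹) * S.Δ ^ k = w := by group
    rwa [e] at this

lemma iota_conj_zpow (k : ℤ) (x : G) :
    S.iota ((S.Δ ^ k)⁻¹ * x * S.Δ ^ k) = (S.Δ ^ k)⁻¹ * S.iota x * S.Δ ^ k := by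
  rw [iota, iota, S.inf_conj_zpow k x, S.conj_zpow_wedge]
  congr 1
  · group
  · group

lemma pp_conj_zpow (k : ℤ) (x : G) :
    S.pp ((S.Δ ^ k)⁻¹ * x * S.Δ ^ k) = (S.Δ ^ k)⁻¹ * S.pp x * S.Δ ^ k := by
  rw [pp, pp]
  have e : ((S.Δ ^ k)⁻¹ * x * S.Δ ^ k)⁻¹ = (S.Δ ^ k)⁻¹ * x⁻¹ * S.Δ ^ k := by group
  rw [e, S.iota_conj_zpow, S.iota_conj_zpow, S.conj_zpow_wedge]
/-! ### Definitional helper lemmas -/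

lemma iota_def (x : G) : S.iota x = S.wedge (x * S.Δ ^ (-S.inf x)) S.Δ := rfl
lemma sl_def (x : G) : S.sl x = (S.pp x)⁻¹ * x * S.pp x := rfl
lemma transport_def (x α : G) :
    S.transport x α = (S.pp x)⁻¹ * α * S.pp (α⁻¹ * x * α) := rfl
lemma itTransport_succ (x s' : G) (i : ℕ) :
    S.itTransport x (i+1) s' = S.transport ((S.sl)^[i] x) (S.itTransport x i s') := rfl
lemma PP_succ (x : G) (i : ℕ) :
    S.PP x (i+1) = S.PP x i * S.pp ((S.sl)^[i] x) := rfl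

/-! ### The key transport lemmas -/

lemma iota_le_conj {x α : G} (hα : α ∈ S.P) (h : S.inf (α⁻¹ * x * α) ≤ S.inf x) :
    S.le (S.iota x) (α * S.iota (α⁻¹ * x * α)) := by
  set y := α⁻¹ * x * α with hy
  rw [S.iota_def y, mul_wedge]
  refine S.le_wedge' ?_ ?_
  · refine S.le_trans' (S.iota_le x) ?_
    rw [S.le_def]
    have hmem : (S.Δ ^ S.inf x * α * (S.Δ ^ S.inf x)⁻¹) * S.Δ ^ (S.inf x - S.inf y) ∈ S.P :=
      S.P.mul_mem (S.conj_zpow_mem' _ hα) (S.delta_zpow_mem (by omega))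
    have e : (S.Δ ^ S.inf x * α * (S.Δ ^ S.inf x)⁻¹) * S.Δ ^ (S.inf x - S.inf y)
        = (x * S.Δ ^ (-S.inf x))⁻¹ * (α * (y * S.Δ ^ (-S.inf y))) := by
      rw [hy]; group
    rwa [e] at hmem
  · refine S.le_trans' (S.iota_le_delta x) ?_
    rw [S.le_def]
    have := S.conj_pos α hα
    have e : S.Δ⁻¹ * α * S.Δ = S.Δ⁻¹ * (α * S.Δ) := by group
    rwa [e] at this

lemma pp_le_conj {x α : G} (hα : α ∈ S.P) (hinf : S.inf (α⁻¹ * x * α) ≤ S.inf x)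
    (hsup : S.sup x ≤ S.sup (α⁻¹ * x * α)) :
    S.le (S.pp x) (α * S.pp (α⁻¹ * x * α)) := by
  have h1 : S.le (S.iota x) (α * S.iota (α⁻¹ * x * α)) := S.iota_le_conj hα hinf
  have h2 : S.le (S.iota x⁻¹) (α * S.iota ((α⁻¹ * x * α)⁻¹)) := by
    have e : (α⁻¹ * x * α)⁻¹ = α⁻¹ * x⁻¹ * α := by group
    rw [e]
    refine S.iota_le_conj hα ?_
    have e1 : α⁻¹ * x⁻¹ * α = (α⁻¹ * x * α)⁻¹ := by group
    rw [e1, S.inf_inv, S.inf_inv]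
    omega
  have goal : S.le (S.pp x) (S.wedge (α * S.iota (α⁻¹ * x * α)) (α * S.iota ((α⁻¹ * x * α)⁻¹))) :=
    S.le_wedge' (S.le_trans' (S.pp_le_iota x) h1) (S.le_trans' (S.pp_le_iota_inv x) h2)
  rwa [← S.mul_wedge, ← pp] at goal

/-! ### Cyclic sliding monotonicity -/

lemma inf_sl_ge (z : G) : S.inf z ≤ S.inf (S.sl z) := by
  refine S.inf_max _ _ ?_
  set i := S.inf z with hi
  have h0 : S.le (S.pp z) (z * S.Δ ^ (-i)) := S.le_trans' (S.pp_le_iota z) (S.iota_le z)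
  have h1 := (S.le_conj_zpow_iff i).mpr h0
  have h2 : S.le ((S.Δ ^ i)⁻¹ * S.pp z * S.Δ ^ i)
      (((S.Δ ^ i)⁻¹ * (z * S.Δ ^ (-i)) * S.Δ ^ i) * S.pp z) :=
    S.le_mul_right h1 (S.pp_mem z)
  rw [S.le_def] at h2
  have e : ((S.Δ ^ i)⁻¹ * S.pp z * S.Δ ^ i)⁻¹ * ((S.Δ ^ i)⁻¹ * (z * S.Δ ^ (-i)) * S.Δ ^ i * S.pp z)
      = (S.Δ ^ i)⁻¹ * ((S.pp z)⁻¹ * z * S.pp z) := by group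
  rw [e] at h2
  rwa [S.sl_def]

lemma sl_inv (z : G) : S.sl z⁻¹ = (S.sl z)⁻¹ := by
  rw [S.sl_def, S.sl_def, S.pp_inv]
  group

lemma sup_sl_le (z : G) : S.sup (S.sl z) ≤ S.sup z := by
  have h := S.inf_sl_ge z⁻¹
  rw [S.sl_inv, S.inf_inv, S.inf_inv] at h
  omega

/-! ### Rigidity -/

lemma sl_of_pp_one {x : G} (h : S.pp x = 1) : S.sl x = x := by
  rw [S.sl_def, h]; group

lemma sl_iter_of_pp_one {x : G} (h : S.pp x = 1) (i : ℕ) : (S.sl)^[i] x = x := by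
  induction i with
  | zero => rfl
  | succ n ih => rw [Function.iterate_succ_apply', ih, S.sl_of_pp_one h]

/-! ### The main induction -/

lemma main_induction (x s : G) (hx : S.pp x = 1)
    (h1 : S.inf (s⁻¹ * x * s) = S.inf x) (h2 : S.sup (s⁻¹ * x * s) = S.sup x) :
    ∀ i : ℕ,
      S.itTransport x i s = s * S.PP (s⁻¹ * x * s) i ∧
      (S.sl)^[i] (s⁻¹ * x * s) = (S.itTransport x i s)⁻¹ * x * (S.itTransport x i s) ∧
      S.inf x ≤ S.inf ((S.sl)^[i] (s⁻¹ * x * s)) ∧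
      S.sup ((S.sl)^[i] (s⁻¹ * x * s)) ≤ S.sup x ∧
      S.le (S.itTransport x i s) (S.Δ ^ S.sup s) := by
  intro i
  induction i with
  | zero =>
      refine ⟨by simp [itTransport, PP], by simp [itTransport], ?_, ?_, ?_⟩
      · simp only [Function.iterate_zero_apply]; omega
      · simp only [Function.iterate_zero_apply]; omega
      · rw [S.le_def]; exact S.le_sup s
  | succ i ih =>
      obtain ⟨ih1, ih2, ih3, ih4, ih5⟩ := ih
      set t := S.itTransport x i s with ht
      set y := (S.sl)^[i] (s⁻¹ * x * s) with hy
      have hnext : S.itTransport x (i+1) s = t * S.pp y := by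
        show S.transport ((S.sl)^[i] x) t = t * S.pp y
        rw [S.sl_iter_of_pp_one hx, S.transport_def, hx, ← ih2]
        simp
      have hPPnext : S.PP (s⁻¹ * x * s) (i+1) = S.PP (s⁻¹ * x * s) i * S.pp y := by
        rw [S.PP_succ, ← hy]
      have hslnext : (S.sl)^[i+1] (s⁻¹ * x * s) = S.sl y := by
        rw [Function.iterate_succ_apply', hy]
      refine ⟨?_, ?_, ?_, ?_, ?_⟩
      · rw [hnext, hPPnext, ih1, mul_assoc]
      · rw [hslnext, hnext, S.sl_def]
        generalize S.pp y = p
        rw [ih2]; group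
      · rw [hslnext]; exact le_trans ih3 (S.inf_sl_ge y)
      · rw [hslnext]; exact le_trans (S.sup_sl_le y) ih4
      · set k := S.sup s with hk
        have hβ : t⁻¹ * S.Δ ^ k ∈ S.P := ih5
        have hconj : (t⁻¹ * S.Δ ^ k)⁻¹ * y * (t⁻¹ * S.Δ ^ k) = (S.Δ ^ k)⁻¹ * x * S.Δ ^ k := by
          rw [ih2]; group
        have hinf' : S.inf ((t⁻¹ * S.Δ ^ k)⁻¹ * y * (t⁻¹ * S.Δ ^ k)) ≤ S.inf y := by
          rw [hconj, S.inf_conj_zpow]; exact ih3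
        have hsup' : S.sup y ≤ S.sup ((t⁻¹ * S.Δ ^ k)⁻¹ * y * (t⁻¹ * S.Δ ^ k)) := by
          rw [hconj, S.sup_conj_zpow]; exact ih4
        have hP2 := S.pp_le_conj hβ hinf' hsup'
        rw [hconj, S.pp_conj_zpow, hx] at hP2
        rw [hnext, S.le_def]
        rw [S.le_def] at hP2
        have e : (S.pp y)⁻¹ * (t⁻¹ * S.Δ ^ k * ((S.Δ ^ k)⁻¹ * 1 * S.Δ ^ k))
            = (t * S.pp y)⁻¹ * S.Δ ^ k := by group
        rwa [e] at hP2

end Garside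

open Garside in
theorem statement18 {G : Type*} [Group G] (S : Garside G) (x s : G)
    (hx : S.pp x = 1)
    (h1 : S.inf (s⁻¹ * x * s) = S.inf x) (h2 : S.sup (s⁻¹ * x * s) = S.sup x) :
    S.PP (s⁻¹ * x * s) 0 = 1 ∧
    (∀ i : ℕ,
      S.le (S.PP (s⁻¹ * x * s) i) (S.PP (s⁻¹ * x * s) (i + 1)) ∧
      S.le (S.PP (s⁻¹ * x * s) (i + 1)) (S.Δ ^ S.len s)) ∧
    S.itTransport x 0 s = s ∧
    (∀ i : ℕ,
      S.le (S.itTransport x i s) (S.itTransport x (i + 1) s) ∧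
      S.le (S.itTransport x (i + 1) s) (S.Δ ^ S.sup s)) := by
  refine ⟨rfl, ?_, rfl, ?_⟩
  · intro i
    constructor
    · rw [S.PP_succ]
      exact S.le_mul_right (S.le_refl _) (S.pp_mem _)
    · obtain ⟨e1, -, -, -, e5⟩ := S.main_induction x s hx h1 h2 (i+1)
      have hPP : S.PP (s⁻¹ * x * s) (i+1) = s⁻¹ * S.itTransport x (i+1) s := by
        rw [e1]; group
      have hsupt : S.sup (S.itTransport x (i+1) s) ≤ S.sup s := S.sup_min _ _ e5
      have hsupPP : S.sup (S.PP (s⁻¹ * x * s) (i+1)) ≤ S.len s := by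
        have hle : S.sup (s⁻¹ * S.itTransport x (i+1) s)
            ≤ S.sup s⁻¹ + S.sup (S.itTransport x (i+1) s) := S.sup_mul_le _ _
        rw [← hPP] at hle
        have hsi := S.sup_inv s
        have : S.len s = S.sup s - S.inf s := rfl
        omega
      refine S.le_trans' ?_ (S.delta_zpow_le hsupPP)
      exact S.le_sup _
  · intro i
    constructor
    · have e1i := (S.main_induction x s hx h1 h2 i).1
      have e1i1 := (S.main_induction x s hx h1 h2 (i+1)).1
      rw [e1i, e1i1, S.PP_succ, ← mul_assoc]
      exact S.le_mul_right (S.le_refl _) (S.pp_mem _)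
    · exact (S.main_induction x s hx h1 h2 (i+1)).2.2.2.2

end GarsidePaper
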